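/- arXiv:2511.09824 — 13 statements merged into one kernel-verified Lean document; each statement's English description precedes it below -/
import Mathlib

section
/- Let H be a Heyting algebra and box : H → H a fronton operator on H. Then for every a ∈ H, the set F_a = {b ∈ H : (b ⇨ a) ≤ b} is a filter containing box a as its least element: ⊤ ∈ F_a, F_a is upward closed and closed under binary meets, (box a ⇨ a) ≤ box a, and box a ≤ b for every b ∈ H with (b ⇨ a) ≤ b. Moreover, ⊥ ∈ F_a only if H is trivial (⊥ = ⊤). -/
/-- For a fronton operator `box` on a Heyting algebra `H` and any `a : H`,
the set `F_a = {b | (b ⇨ a) ≤ b}` is a filter containing `box a` as its least element,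
and contains `⊥` only if `H` is trivial. -/
theorem fronton_filter_least {H : Type*} [HeytingAlgebra H] (box : H → H)
    (hTop : box ⊤ = ⊤)
    (hMeet : ∀ a b : H, box (a ⊓ b) = box a ⊓ box b)
    (hIncr : ∀ a : H, a ≤ box a)
    (hFront : ∀ a b : H, box a ≤ b ⊔ (b ⇨ a))
    (hLob : ∀ a : H, (box a ⇨ a) ≤ a)
    (a : H) :
    (((⊤ : H) ⇨ a) ≤ ⊤)
    ∧ (∀ b c : H, (b ⇨ a) ≤ b → b ≤ c → (c ⇨ a) ≤ c)
    ∧ (∀ b c : H, (b ⇨ a) ≤ b → (c ⇨ a) ≤ c → ((b ⊓ c) ⇨ a) ≤ b ⊓ c)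
    ∧ ((box a ⇨ a) ≤ box a)
    ∧ (∀ b : H, (b ⇨ a) ≤ b → box a ≤ b)
    ∧ (((⊥ : H) ⇨ a) ≤ ⊥ → (⊥ : H) = (⊤ : H)) := by
  have least : ∀ b : H, (b ⇨ a) ≤ b → box a ≤ b := by
    intro b hb
    have := hFront a b
    calc box a ≤ b ⊔ (b ⇨ a) := hFront a b
      _ ≤ b := sup_le le_rfl hb
  refine ⟨le_top, ?_, ?_, ?_, least, ?_⟩
  · intro b c hb hbc
    calc (c ⇨ a) ≤ (b ⇨ a) := himp_le_himp_right hbc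
      _ ≤ b := hb
      _ ≤ c := hbc
  · intro b c hb hc
    have h1 : box a ≤ b ⊓ c := le_inf (least b hb) (least c hc)
    calc ((b ⊓ c) ⇨ a) ≤ (box a ⇨ a) := himp_le_himp_right h1
      _ ≤ a := hLob a
      _ ≤ box a := hIncr a
      _ ≤ b ⊓ c := h1
  · exact le_trans (hLob a) (hIncr a)
  · intro h
    exact le_antisymm bot_le (le_trans (by simp) h)
end

section
/- Let H be a Heyting algebra and m : H → H a map such that for every a ∈ H, m(a) is the least element of F_a, i.e. (m(a) ⇨ a) ≤ m(a), and m(a) ≤ b for every b ∈ H with (b ⇨ a) ≤ b. Then m is a fronton operator on H: for all a, b ∈ H, m(⊤) = ⊤, m(a ⊓ b) = m(a) ⊓ m(b), a ≤ m(a), m(a) ≤ b ⊔ (b ⇨ a), and (m(a) ⇨ a) ≤ a. -/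
/-- If `m : H → H` sends each `a` to the least element of
`F_a = {b | (b ⇨ a) ≤ b}`, then `m` is a fronton operator on `H`. -/
theorem least_of_filter_is_fronton {H : Type*} [HeytingAlgebra H] (m : H → H)
    (hmem : ∀ a : H, (m a ⇨ a) ≤ m a)
    (hleast : ∀ a b : H, (b ⇨ a) ≤ b → m a ≤ b) :
    m ⊤ = ⊤
    ∧ (∀ a b : H, m (a ⊓ b) = m a ⊓ m b)
    ∧ (∀ a : H, a ≤ m a)
    ∧ (∀ a b : H, m a ≤ b ⊔ (b ⇨ a))
    ∧ (∀ a : H, (m a ⇨ a) ≤ a) := by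
  have hinc : ∀ a : H, a ≤ m a := fun a => le_trans le_himp (hmem a)
  have hmono : ∀ a b : H, a ≤ b → m a ≤ m b := by
    intro a b hab
    exact hleast a (m b) (le_trans (himp_le_himp_left hab) (hmem b))
  have hopen : ∀ a b : H, m a ≤ b ⊔ (b ⇨ a) := by
    intro a b
    apply hleast
    rw [sup_himp_distrib]
    calc (b ⇨ a) ⊓ ((b ⇨ a) ⇨ a) = (b ⇨ a) ⊓ a := inf_himp _ _
      _ ≤ a := inf_le_right
      _ ≤ b ⇨ a := le_himp
      _ ≤ b ⊔ (b ⇨ a) := le_sup_right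
  refine ⟨?_, ?_, hinc, hopen, ?_⟩
  · exact top_le_iff.mp (le_trans le_himp (hmem ⊤))
  · intro a b
    apply le_antisymm
    · exact le_inf (hmono _ _ inf_le_left) (hmono _ _ inf_le_right)
    · set c := m (a ⊓ b) with hc
      calc m a ⊓ m b ≤ (c ⊔ (c ⇨ a)) ⊓ (c ⊔ (c ⇨ b)) :=
            inf_le_inf (hopen a c) (hopen b c)
        _ = c ⊔ ((c ⇨ a) ⊓ (c ⇨ b)) := (sup_inf_left _ _ _).symm
        _ = c ⊔ (c ⇨ a ⊓ b) := by rw [himp_inf_distrib]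
        _ ≤ c ⊔ c := sup_le_sup_left (hmem _) _
        _ = c := sup_idem _
  · intro a
    calc (m a ⇨ a) = m a ⊓ (m a ⇨ a) := (inf_eq_right.mpr (hmem a)).symm
      _ = m a ⊓ a := inf_himp _ _
      _ ≤ a := inf_le_right
end

section
/- If box₁ and box₂ are both fronton operators on the same Heyting algebra H, then box₁ a = box₂ a for every a ∈ H. That is, a Heyting algebra admits at most one fronton operator. -/
/-- A Heyting algebra admits at most one fronton operator. -/
theorem fronton_unique {H : Type*} [HeytingAlgebra H] (box₁ box₂ : H → H)
    (h₁Top : box₁ ⊤ = ⊤)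
    (h₁Meet : ∀ a b : H, box₁ (a ⊓ b) = box₁ a ⊓ box₁ b)
    (h₁Incr : ∀ a : H, a ≤ box₁ a)
    (h₁Front : ∀ a b : H, box₁ a ≤ b ⊔ (b ⇨ a))
    (h₁Lob : ∀ a : H, (box₁ a ⇨ a) ≤ a)
    (h₂Top : box₂ ⊤ = ⊤)
    (h₂Meet : ∀ a b : H, box₂ (a ⊓ b) = box₂ a ⊓ box₂ b)
    (h₂Incr : ∀ a : H, a ≤ box₂ a)
    (h₂Front : ∀ a b : H, box₂ a ≤ b ⊔ (b ⇨ a))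
    (h₂Lob : ∀ a : H, (box₂ a ⇨ a) ≤ a)
    (a : H) :
    box₁ a = box₂ a := by
  refine le_antisymm ?_ ?_
  · exact (h₁Front a (box₂ a)).trans
      (sup_le le_rfl ((h₂Lob a).trans (h₂Incr a)))
  · exact (h₂Front a (box₁ a)).trans
      (sup_le le_rfl ((h₁Lob a).trans (h₁Incr a)))
end

section
/- Every finite Heyting algebra H admits exactly one fronton operator; that is, there exists a unique map box : H → H satisfying, for all a, b ∈ H: box ⊤ = ⊤, box (a ⊓ b) = box a ⊓ box b, a ≤ box a, box a ≤ b ⊔ (b ⇨ a), and (box a ⇨ a) ≤ a. -/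
section Aux

variable {H : Type*} [HeytingAlgebra H]

/-- The set `{b | b ⇨ a ≤ b}` is closed under meets. -/
lemma fronton_aux_inf_closed {a b c : H} (hb : b ⇨ a ≤ b) (hc : c ⇨ a ≤ c) :
    (b ⊓ c) ⇨ a ≤ b ⊓ c := by
  set x := (b ⊓ c) ⇨ a with hx
  have hxbc : x ⊓ (b ⊓ c) ≤ a := himp_inf_le
  have hxb_c : x ⊓ b ≤ c := by
    refine le_trans ?_ hc
    rw [le_himp_iff]
    calc x ⊓ b ⊓ c = x ⊓ (b ⊓ c) := by rw [inf_assoc]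
    _ ≤ a := hxbc
  have hxb_a : x ⊓ b ≤ a :=
    (le_inf inf_le_left (le_inf inf_le_right hxb_c)).trans hxbc
  have hxb : x ≤ b := (le_himp_iff.mpr hxb_a).trans hb
  have hxc_b : x ⊓ c ≤ b := by
    refine le_trans ?_ hb
    rw [le_himp_iff]
    calc x ⊓ c ⊓ b = x ⊓ (b ⊓ c) := by rw [inf_assoc, inf_comm c b]
    _ ≤ a := hxbc
  have hxc_a : x ⊓ c ≤ a :=
    (le_inf inf_le_left (le_inf hxc_b inf_le_right)).trans hxbc
  have hxc : x ≤ c := (le_himp_iff.mpr hxc_a).trans hc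
  exact le_inf hxb hxc

lemma fronton_aux_finset_inf {a : H} [DecidableEq H] :
    ∀ s : Finset H, (∀ b ∈ s, b ⇨ a ≤ b) → (s.inf id) ⇨ a ≤ s.inf id := by
  intro s
  induction s using Finset.induction_on with
  | empty => intro _; simp
  | insert b s hb ih =>
    intro h
    rw [Finset.inf_insert]
    exact fronton_aux_inf_closed (h b (Finset.mem_insert_self b s))
      (ih fun c hc => h c (Finset.mem_insert_of_mem hc))

end Aux

/-- Every finite Heyting algebra admits exactly one fronton operator. -/
theorem finite_heyting_unique_fronton {H : Type*} [HeytingAlgebra H] [Finite H] :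
    ∃! box : H → H,
      box ⊤ = ⊤
      ∧ (∀ a b : H, box (a ⊓ b) = box a ⊓ box b)
      ∧ (∀ a : H, a ≤ box a)
      ∧ (∀ a b : H, box a ≤ b ⊔ (b ⇨ a))
      ∧ (∀ a : H, (box a ⇨ a) ≤ a) := by
  classical
  haveI := Fintype.ofFinite H
  set box : H → H := fun a => (Finset.univ.filter (fun b : H => b ⇨ a ≤ b)).inf id with hbox
  -- box a belongs to the defining set
  have mem : ∀ a : H, box a ⇨ a ≤ box a := by
    intro a
    apply fronton_aux_finset_inf
    intro b hb
    exact (Finset.mem_filter.mp hb).2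
  -- box a is a lower bound of the defining set
  have min : ∀ a b : H, b ⇨ a ≤ b → box a ≤ b := by
    intro a b hb
    exact Finset.inf_le (Finset.mem_filter.mpr ⟨Finset.mem_univ b, hb⟩)
  -- the five properties
  have h3 : ∀ a : H, a ≤ box a := by
    intro a
    apply Finset.le_inf
    intro b hb
    exact (le_himp_iff.mpr inf_le_left).trans (Finset.mem_filter.mp hb).2
  have h5 : ∀ a : H, (box a ⇨ a) ≤ a := by
    intro a
    calc box a ⇨ a = (box a ⇨ a) ⊓ box a := (inf_eq_left.mpr (mem a)).symm
    _ ≤ a := himp_inf_le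
  have h4 : ∀ a b : H, box a ≤ b ⊔ (b ⇨ a) := by
    intro a b
    apply min
    calc (b ⊔ (b ⇨ a)) ⇨ a ≤ b ⇨ a := himp_le_himp_right le_sup_left
    _ ≤ b ⊔ (b ⇨ a) := le_sup_right
  have h1 : box ⊤ = ⊤ := le_antisymm le_top (h3 ⊤)
  have hmono : ∀ a b : H, a ≤ b → box a ≤ box b := by
    intro a b hab
    have hle : box b ⇨ a ≤ box b :=
      ((himp_le_himp_left hab).trans (h5 b)).trans (h3 b)
    exact (h4 a (box b)).trans (sup_le le_rfl hle)
  have h2 : ∀ a b : H, box (a ⊓ b) = box a ⊓ box b := by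
    intro a b
    apply le_antisymm
    · exact le_inf (hmono _ _ inf_le_left) (hmono _ _ inf_le_right)
    · set c := box (a ⊓ b) with hc
      have hca : box a ≤ c ⊔ (c ⇨ a) := h4 a c
      have hcb : box b ≤ c ⊔ (c ⇨ b) := h4 b c
      have hkey : (c ⇨ a) ⊓ (c ⇨ b) ≤ c := by
        rw [← himp_inf_distrib]
        exact mem (a ⊓ b)
      calc box a ⊓ box b ≤ (c ⊔ (c ⇨ a)) ⊓ (c ⊔ (c ⇨ b)) := inf_le_inf hca hcb
      _ = c ⊔ ((c ⇨ a) ⊓ (c ⇨ b)) := (sup_inf_left c _ _).symm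
      _ ≤ c ⊔ c := sup_le_sup_left hkey c
      _ = c := sup_idem c
  refine ⟨box, ⟨h1, h2, h3, h4, h5⟩, ?_⟩
  rintro box' ⟨_, _, h3', h4', h5'⟩
  funext a
  apply le_antisymm
  · have := h4' a (box a)
    have : box' a ≤ box a ⊔ (box a ⇨ a) := this
    exact this.trans (sup_le le_rfl ((h5 a).trans (h3 a)))
  · have := h4 a (box' a)
    exact this.trans (sup_le le_rfl ((h5' a).trans (h3' a)))
end

section
/- Let H be a Heyting algebra equipped with a frontal operator box. For all a, b ∈ H with a ≤ b and b ≤ box a, setting c := (b ⇨ a) ⊓ box a one has b ⊓ c = a and b ⊔ c = box a. Consequently, in the interval [a, box a] every element b has a complement relative to the bounds a and box a, given by (b ⇨ a) ⊓ box a. -/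
/-- In a Heyting algebra with a frontal operator `box`, every `b` in the
interval `[a, box a]` has `(b ⇨ a) ⊓ box a` as a complement relative to the bounds. -/
theorem interval_complement {H : Type*} [HeytingAlgebra H] (box : H → H)
    (hTop : box ⊤ = ⊤)
    (hMeet : ∀ a b : H, box (a ⊓ b) = box a ⊓ box b)
    (hIncr : ∀ a : H, a ≤ box a)
    (hFront : ∀ a b : H, box a ≤ b ⊔ (b ⇨ a))
    (a b : H) (hab : a ≤ b) (hb : b ≤ box a) :
    b ⊓ ((b ⇨ a) ⊓ box a) = a ∧ b ⊔ ((b ⇨ a) ⊓ box a) = box a := by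
  constructor
  · rw [← inf_assoc, inf_himp, inf_eq_right.mpr hab, inf_eq_left.mpr (hIncr a)]
  · rw [sup_inf_left]
    exact le_antisymm (inf_le_of_right_le (sup_le hb le_rfl))
      (le_inf (hFront a b) le_sup_right)
end

section
/- Let M be a K4-algebra. Then: (i) ⊥, ⊤ ∈ O⁺(M), and O⁺(M) is closed under ⊓, under ⊔, under the map a ↦ □a, and under the map (a, b) ↦ □⁺(aᶜ ⊔ b); (ii) for all a, b, c ∈ O⁺(M): c ≤ □⁺(aᶜ ⊔ b) if and only if a ⊓ c ≤ b, so □⁺(aᶜ ⊔ b) is a Heyting implication on the bounded distributive lattice O⁺(M); (iii) for all a, b ∈ O⁺(M): a ≤ □a and □a ≤ b ⊔ □⁺(bᶜ ⊔ a). Hence O⁺(M), with implication (a, b) ↦ □⁺(aᶜ ⊔ b) and modal operator a ↦ □a, is a frontal Heyting algebra. -/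
/-- For a K4-algebra `M`, the set of quasi-open elements
`O⁺(M) = {a | a ≤ □a}` contains `⊥, ⊤`, is closed under `⊓`, `⊔`, `□`, and
`(a,b) ↦ □⁺(aᶜ ⊔ b)` (where `□⁺x = x ⊓ □x`); the operation `□⁺(aᶜ ⊔ b)` is a
Heyting implication on `O⁺(M)`; and `□` is a frontal operator on the resulting
Heyting algebra. -/
theorem quasiOpen_frontal_heyting {M : Type*} [BooleanAlgebra M] (box : M → M)
    (hTop : box ⊤ = ⊤)
    (hMeet : ∀ a b : M, box (a ⊓ b) = box a ⊓ box b)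
    (h4 : ∀ a : M, box a ≤ box (box a)) :
    -- (i) closure properties of O⁺(M) = {a | a ≤ box a}
    ((⊥ : M) ≤ box ⊥)
    ∧ ((⊤ : M) ≤ box ⊤)
    ∧ (∀ a b : M, a ≤ box a → b ≤ box b → a ⊓ b ≤ box (a ⊓ b))
    ∧ (∀ a b : M, a ≤ box a → b ≤ box b → a ⊔ b ≤ box (a ⊔ b))
    ∧ (∀ a : M, a ≤ box a → box a ≤ box (box a))
    ∧ (∀ a b : M, a ≤ box a → b ≤ box b →
        (aᶜ ⊔ b) ⊓ box (aᶜ ⊔ b) ≤ box ((aᶜ ⊔ b) ⊓ box (aᶜ ⊔ b)))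
    -- (ii) the Heyting adjunction on O⁺(M)
    ∧ (∀ a b c : M, a ≤ box a → b ≤ box b → c ≤ box c →
        (c ≤ (aᶜ ⊔ b) ⊓ box (aᶜ ⊔ b) ↔ a ⊓ c ≤ b))
    -- (iii) box is a frontal operator on O⁺(M)
    ∧ (∀ a : M, a ≤ box a → a ≤ box a)
    ∧ (∀ a b : M, a ≤ box a → b ≤ box b →
        box a ≤ b ⊔ ((bᶜ ⊔ a) ⊓ box (bᶜ ⊔ a))) := by
  have mono : ∀ a b : M, a ≤ b → box a ≤ box b := by
    intro a b hab
    have : a ⊓ b = a := inf_eq_left.mpr hab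
    calc box a = box (a ⊓ b) := by rw [this]
      _ = box a ⊓ box b := hMeet a b
      _ ≤ box b := inf_le_right
  refine ⟨bot_le, hTop.ge, ?_, ?_, fun a _ => h4 a, ?_, ?_, fun a h => h, ?_⟩
  · intro a b ha hb
    rw [hMeet]; exact inf_le_inf ha hb
  · intro a b ha hb
    exact sup_le (ha.trans (mono _ _ le_sup_left)) (hb.trans (mono _ _ le_sup_right))
  · intro a b _ _
    rw [hMeet]
    exact le_inf inf_le_right (inf_le_right.trans (h4 _))
  · intro a b c _ _ hc
    constructor
    · intro h
      have h1 : c ≤ aᶜ ⊔ b := h.trans inf_le_left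
      calc a ⊓ c ≤ a ⊓ (aᶜ ⊔ b) := inf_le_inf_left a h1
        _ = a ⊓ aᶜ ⊔ a ⊓ b := inf_sup_left a _ _
        _ ≤ b := by simp
    · intro h
      have h1 : c ≤ aᶜ ⊔ b := by
        have := sup_le_sup_right h aᶜ
        calc c = (a ⊔ aᶜ) ⊓ c := by simp
          _ = a ⊓ c ⊔ aᶜ ⊓ c := inf_sup_right a aᶜ c
          _ ≤ b ⊔ aᶜ := sup_le_sup h inf_le_left
          _ = aᶜ ⊔ b := sup_comm _ _
      exact le_inf h1 (hc.trans (mono _ _ h1))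
  · intro a b _ _
    have h1 : bᶜ ⊓ box a ≤ (bᶜ ⊔ a) ⊓ box (bᶜ ⊔ a) :=
      le_inf (inf_le_left.trans le_sup_left) (inf_le_right.trans (mono _ _ le_sup_right))
    calc box a = (b ⊔ bᶜ) ⊓ box a := by simp
      _ = b ⊓ box a ⊔ bᶜ ⊓ box a := inf_sup_right b bᶜ (box a)
      _ ≤ b ⊔ (bᶜ ⊔ a) ⊓ box (bᶜ ⊔ a) := sup_le_sup inf_le_left h1
end

section
/- Let M be a Magari algebra. Then for every a ∈ O⁺(M): □⁺((□a)ᶜ ⊔ a) ≤ a. Hence O⁺(M), with Heyting implication (a, b) ↦ □⁺(aᶜ ⊔ b) and modal operator a ↦ □a, satisfies the fronton law (box a ⇨ a) ≤ a, i.e., it is a fronton (a KM-algebra). -/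
/-- In a Magari algebra `M`, for every quasi-open element `a`
(`a ≤ □a`), the fronton law `□⁺((□a)ᶜ ⊔ a) ≤ a` holds, where `□⁺x = x ⊓ □x`.
Hence `O⁺(M)` is a fronton (a KM-algebra). -/
theorem magari_quasiOpen_fronton {M : Type*} [BooleanAlgebra M] (box : M → M)
    (hTop : box ⊤ = ⊤)
    (hMeet : ∀ a b : M, box (a ⊓ b) = box a ⊓ box b)
    (h4 : ∀ a : M, box a ≤ box (box a))
    (hMagari : ∀ a : M, box ((box a)ᶜ ⊔ a) ≤ box a)
    (a : M) (ha : a ≤ box a) :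
    ((box a)ᶜ ⊔ a) ⊓ box ((box a)ᶜ ⊔ a) ≤ a := by
  calc ((box a)ᶜ ⊔ a) ⊓ box ((box a)ᶜ ⊔ a)
      ≤ ((box a)ᶜ ⊔ a) ⊓ box a := inf_le_inf_left _ (hMagari a)
    _ = ((box a)ᶜ ⊓ box a) ⊔ (a ⊓ box a) := inf_sup_right _ _ _
    _ ≤ a := by simp
end

section
/- Let (X, ≤, ⊏) be a modalized Esakia space. Then the following are equivalent: (1) X validates the KM axiom, i.e., for every clopen ≤-upset U and every x ∈ X, if for all y with x ≤ y one has (y ∈ ⊠U → y ∈ U), then x ∈ U; (2) for every clopen ≤-downset D and every x ∈ max_⊏ D, it is not the case that x ⊏ x. -/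
/-- The modal box of a set: `⊠U = {x | ∀ y, x ⊏ y → y ∈ U}`. -/
def boxSet {X : Type*} (sq : X → X → Prop) (U : Set X) : Set X :=
  {x | ∀ y, sq x y → y ∈ U}

/-- `max_⊏ U = {x ∈ U | ∀ y, x ⊏ y → y ∈ U → y = x}`. -/
def maxSet {X : Type*} (sq : X → X → Prop) (U : Set X) : Set X :=
  {x | x ∈ U ∧ ∀ y, sq x y → y ∈ U → y = x}

/-- A modalized Esakia space validates the KM axiom iff no
`⊏`-maximal point of any clopen `≤`-downset is `⊏`-reflexive. -/
theorem km_axiom_iff_max_irreflexive {X : Type*} [TopologicalSpace X]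
    [CompactSpace X] [T2Space X] [PartialOrder X] (sq : X → X → Prop)
    (hbasis : ∀ (x : X) (U : Set X), IsOpen U → x ∈ U →
      ∃ V : Set X, IsClopen V ∧ x ∈ V ∧ V ⊆ U)
    (hupClosed : ∀ x : X, IsClosed {y | x ≤ y})
    (hdownClopen : ∀ U : Set X, IsClopen U → IsClopen {x | ∃ y ∈ U, x ≤ y})
    (hboxClopen : ∀ U : Set X, IsClopen U → (∀ x y, x ∈ U → x ≤ y → y ∈ U) →
      IsClopen (boxSet sq U))
    (hboxUpset : ∀ U : Set X, IsClopen U → (∀ x y, x ∈ U → x ≤ y → y ∈ U) →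
      (∀ x y, x ∈ boxSet sq U → x ≤ y → y ∈ boxSet sq U))
    (hreflClosure : ∀ x y : X, x ≤ y ↔ x = y ∨ sq x y) :
    ((∀ U : Set X, IsClopen U → (∀ x y, x ∈ U → x ≤ y → y ∈ U) →
        ∀ x : X, (∀ y, x ≤ y → (y ∈ boxSet sq U → y ∈ U)) → x ∈ U)
      ↔
     (∀ D : Set X, IsClopen D → (∀ x y, x ∈ D → y ≤ x → y ∈ D) →
        ∀ x ∈ maxSet sq D, ¬ sq x x)) := by
  constructor
  · -- (1) → (2)
    intro h1 D hD hDdown x hx hxx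
    have hUup : ∀ a b : X, a ∈ Dᶜ → a ≤ b → b ∈ Dᶜ := by
      intro a b ha hab hb
      exact ha (hDdown b a hb hab)
    have hkey : ∀ y, x ≤ y → y ∈ boxSet sq Dᶜ → y ∈ Dᶜ := by
      intro y hxy hybox
      rcases (hreflClosure x y).1 hxy with heq | hsq
      · exact hybox y (heq ▸ hxx)
      · by_contra hyD
        simp only [Set.mem_compl_iff, not_not] at hyD
        have hyx : y = x := hx.2 y hsq hyD
        exact (hybox y (hyx ▸ hxx)) hyD
    exact (h1 Dᶜ hD.compl hUup x hkey) hx.1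
  · -- (2) → (1)
    intro h2 U hU hUup x hx
    by_contra hxU
    set F : Set X := {y | y ∉ U ∧ x ≤ y} with hFdef
    have hFclosed : IsClosed F := by
      have : F = Uᶜ ∩ {y | x ≤ y} := rfl
      rw [this]
      exact (hU.compl.isClosed).inter (hupClosed x)
    have hxF : x ∈ F := ⟨hxU, le_refl x⟩
    -- Zorn's lemma: F has a ≤-maximal element
    obtain ⟨m, hm⟩ : ∃ m, Maximal (· ∈ F) m := by
      apply zorn_le₀
      intro c hcF hchain
      rcases Set.eq_empty_or_nonempty c with rfl | ⟨z₀, hz₀⟩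
      · exact ⟨x, hxF, by simp⟩
      · have : Nonempty c := ⟨⟨z₀, hz₀⟩⟩
        have key : (⋂ z : c, (F ∩ {y | (z : X) ≤ y})).Nonempty := by
          apply IsCompact.nonempty_iInter_of_directed_nonempty_isCompact_isClosed
          · rintro ⟨a, ha⟩ ⟨b, hb⟩
            rcases hchain.total ha hb with hab | hba
            · exact ⟨⟨b, hb⟩, fun y hy => ⟨hy.1, le_trans hab hy.2⟩, fun y hy => hy⟩
            · exact ⟨⟨a, ha⟩, fun y hy => hy, fun y hy => ⟨hy.1, le_trans hba hy.2⟩⟩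
          · rintro ⟨a, ha⟩
            exact ⟨a, hcF ha, le_refl a⟩
          · intro z
            exact (hFclosed.inter (hupClosed _)).isCompact
          · intro z
            exact hFclosed.inter (hupClosed _)
        obtain ⟨ub, hub⟩ := key
        simp only [Set.mem_iInter] at hub
        exact ⟨ub, (hub ⟨z₀, hz₀⟩).1, fun z hz => (hub ⟨z, hz⟩).2⟩
    have hmF : m ∈ F := hm.1
    have hmax : ∀ z ∈ F, m ≤ z → z = m := fun z hz hmz => le_antisymm (hm.2 hz hmz) hmz
    -- m is not in boxSet sq U
    have hmbox : m ∉ boxSet sq U := fun h => hmF.1 (hx m hmF.2 h)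
    simp only [boxSet, Set.mem_setOf_eq, not_forall] at hmbox
    obtain ⟨z, hsq, hzU⟩ := hmbox
    have hmz : m ≤ z := (hreflClosure m z).2 (Or.inr hsq)
    have hzm : z = m := hmax z ⟨hzU, le_trans hmF.2 hmz⟩ hmz
    have hsqmm : sq m m := hzm ▸ hsq
    -- apply (2) with D = Uᶜ
    have hdown : ∀ a b : X, a ∈ Uᶜ → b ≤ a → b ∈ Uᶜ := by
      intro a b ha hba hb
      exact ha (hUup b a hb hba)
    have hmmax : m ∈ maxSet sq Uᶜ := by
      refine ⟨hmF.1, fun y hsqy hyU => ?_⟩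
      have hmy : m ≤ y := (hreflClosure m y).2 (Or.inr hsqy)
      exact hmax y ⟨hyU, le_trans hmF.2 hmy⟩ hmy
    exact h2 Uᶜ hU.compl hdown m hmmax hsqmm
end

section
/- Let X be a topological space with a binary relation ⊏, and let ≤ be the reflexive closure of ⊏. Assume ≤ is transitive and antisymmetric (hence a partial order), and that ↓U := {x : ∃y ∈ U, x ≤ y} is clopen for every clopen U ⊆ X. If for every clopen ≤-downset D every point of max_⊏ D is ⊏-irreflexive, then for every clopen U ⊆ X every point of max_⊏ U is ⊏-irreflexive. (Dually: the ⊏-reduct of a KM-space satisfies the GL maximality condition for all clopen sets.) -/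
/-- The reflexive closure of a relation. -/
def rcl {X : Type*} (sq : X → X → Prop) (x y : X) : Prop := x = y ∨ sq x y

/-- If every `⊏`-maximal point of every clopen `≤`-downset is
`⊏`-irreflexive, then every `⊏`-maximal point of every clopen set is
`⊏`-irreflexive (where `≤` is the reflexive closure of `⊏`, assumed to be a
partial order, and downsets of clopens are clopen). -/
theorem max_irreflexive_clopen_of_downsets {X : Type*} [TopologicalSpace X]
    (sq : X → X → Prop)
    (htrans : ∀ x y z : X, rcl sq x y → rcl sq y z → rcl sq x z)
    (hantisymm : ∀ x y : X, rcl sq x y → rcl sq y x → x = y)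
    (hdownClopen : ∀ U : Set X, IsClopen U → IsClopen {x | ∃ y ∈ U, rcl sq x y})
    (hmaxDown : ∀ D : Set X, IsClopen D → (∀ x y, x ∈ D → rcl sq y x → y ∈ D) →
      ∀ x, x ∈ D → (∀ y, sq x y → y ∈ D → y = x) → ¬ sq x x)
    (U : Set X) (hU : IsClopen U) (x : X)
    (hxU : x ∈ U) (hxmax : ∀ y, sq x y → y ∈ U → y = x) :
    ¬ sq x x := by
  set D : Set X := {z | ∃ y ∈ U, rcl sq z y} with hD
  have hDclopen : IsClopen D := hdownClopen U hU
  have hDdown : ∀ a b, a ∈ D → rcl sq b a → b ∈ D := by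
    rintro a b ⟨u, huU, hau⟩ hba
    exact ⟨u, huU, htrans b a u hba hau⟩
  have hxD : x ∈ D := ⟨x, hxU, Or.inl rfl⟩
  refine hmaxDown D hDclopen hDdown x hxD ?_
  rintro y hxy ⟨u, huU, hyu⟩
  have hxu : rcl sq x u := htrans x y u (Or.inr hxy) hyu
  have hux : u = x := by
    rcases hxu with h | h
    · exact h.symm
    · exact hxmax u h huU
  rw [hux] at hyu
  exact hantisymm y x hyu (Or.inr hxy)
end

section
/- Let X and Y be GL-spaces and f : X → Y a pre-stable map. Let D be a finite family of clopen subsets of Y and E := {↓_{R⁺} d : d ∈ D}, where ↓_{R⁺} d := {x : ∃y ∈ d, x = y ∨ R x y}. If f satisfies the BFC^R for E, then f satisfies the BFC^R for D. -/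
/-- The `R⁺`-downset of a set: `↓_{R⁺} d = {x | ∃ y ∈ d, x = y ∨ R x y}`. -/
def downRp {X : Type*} (R : X → X → Prop) (d : Set X) : Set X :=
  {x | ∃ y ∈ d, x = y ∨ R x y}

/-- For a pre-stable map `f` between GL-spaces and a finite
family `D` of clopens of `Y`, if `f` satisfies the BFC^R for
`E = {↓_{R⁺} d : d ∈ D}`, then `f` satisfies the BFC^R for `D`. -/
theorem bfc_of_bfc_downsets {X Y : Type*}
    [TopologicalSpace X] [CompactSpace X] [T2Space X]
    [TopologicalSpace Y] [CompactSpace Y] [T2Space Y]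
    (RX : X → X → Prop) (RY : Y → Y → Prop)
    (hbasisX : ∀ (x : X) (U : Set X), IsOpen U → x ∈ U →
      ∃ V : Set X, IsClopen V ∧ x ∈ V ∧ V ⊆ U)
    (hpointX : ∀ x : X, IsClosed {y | RX x y})
    (hdownX : ∀ U : Set X, IsClopen U → IsClopen {x | ∃ y ∈ U, RX x y})
    (htransX : Transitive RX)
    (hlobX : ∀ U : Set X, IsClopen U → ∀ x : X,
      (∀ y, RX x y → ((∀ z, RX y z → z ∈ U) → y ∈ U)) → (∀ y, RX x y → y ∈ U))
    (hbasisY : ∀ (y : Y) (U : Set Y), IsOpen U → y ∈ U →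
      ∃ V : Set Y, IsClopen V ∧ y ∈ V ∧ V ⊆ U)
    (hpointY : ∀ x : Y, IsClosed {y | RY x y})
    (hdownY : ∀ U : Set Y, IsClopen U → IsClopen {x | ∃ y ∈ U, RY x y})
    (htransY : Transitive RY)
    (hlobY : ∀ U : Set Y, IsClopen U → ∀ x : Y,
      (∀ y, RY x y → ((∀ z, RY y z → z ∈ U) → y ∈ U)) → (∀ y, RY x y → y ∈ U))
    (f : X → Y) (hf : Continuous f)
    (hpre : ∀ x y : X, (x = y ∨ RX x y) → (f x = f y ∨ RY (f x) (f y)))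
    (D : Set (Set Y)) (hDfin : D.Finite) (hDclopen : ∀ d ∈ D, IsClopen d)
    (hBFCE : ∀ (x : X), ∀ d ∈ D,
      ((∃ y ∈ downRp RY d, RY (f x) y) ↔ (∃ z : X, RX x z ∧ f z ∈ downRp RY d))) :
    ∀ (x : X), ∀ d ∈ D,
      ((∃ y ∈ d, RY (f x) y) ↔ (∃ z : X, RX x z ∧ f z ∈ d)) := by

  intro x d hd
  have hdc := hDclopen d hd
  have hdownclopen : IsClopen (downRp RY d) := by
    have : downRp RY d = d ∪ {x | ∃ y ∈ d, RY x y} := by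
      ext a
      constructor
      · rintro ⟨y, hy, rfl | h⟩
        · exact Or.inl hy
        · exact Or.inr ⟨y, hy, h⟩
      · rintro (h | ⟨y, hy, h⟩)
        · exact ⟨a, h, Or.inl rfl⟩
        · exact ⟨y, hy, Or.inr h⟩
    rw [this]
    exact hdc.union (hdownY d hdc)
  constructor
  · rintro ⟨y, hy, hxy⟩
    have h1 : ∃ z : X, RX x z ∧ f z ∈ downRp RY d :=
      (hBFCE x d hd).mp ⟨y, ⟨y, hy, Or.inl rfl⟩, hxy⟩
    -- Use Löb on X with U = complement of f ⁻¹' (downRp RY d)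
    have hU : IsClopen ((f ⁻¹' (downRp RY d))ᶜ) :=
      (hdownclopen.preimage hf).compl
    by_contra hno
    push_neg at hno
    have hnotall : ¬ (∀ y, RX x y → y ∈ (f ⁻¹' (downRp RY d))ᶜ) := by
      intro hall
      obtain ⟨z, hxz, hz⟩ := h1
      exact hall z hxz hz
    have hnotprem : ¬ (∀ y, RX x y → ((∀ z, RX y z → z ∈ (f ⁻¹' (downRp RY d))ᶜ) → y ∈ (f ⁻¹' (downRp RY d))ᶜ)) := by
      intro hprem
      exact hnotall (hlobX _ hU x hprem)
    push_neg at hnotprem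
    obtain ⟨z, hxz, hsucc, hz⟩ := hnotprem
    simp only [Set.mem_compl_iff, Set.mem_preimage, not_not] at hz
    obtain ⟨w, hw, rfl | hzw⟩ := hz
    · exact hno z hxz hw
    · have : ∃ z' : X, RX z z' ∧ f z' ∈ downRp RY d :=
        (hBFCE z d hd).mp ⟨w, ⟨w, hw, Or.inl rfl⟩, hzw⟩
      obtain ⟨z', hzz', hz'⟩ := this
      exact (hsucc z' hzz') hz'
  · rintro ⟨z, hxz, hz⟩
    have h1 : ∃ y ∈ downRp RY d, RY (f x) y :=
      (hBFCE x d hd).mpr ⟨z, hxz, ⟨f z, hz, Or.inl rfl⟩⟩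
    obtain ⟨y, ⟨w, hw, rfl | hyw⟩, hxy⟩ := h1
    · exact ⟨y, hw, hxy⟩
    · exact ⟨w, hw, htransY hxy hyw⟩
end

section
/- Let X and Y be KM-spaces and f : X → Y a continuous ≤-preserving map. Let D be a finite family of clopen subsets of Y and E := {↓_≤ d : d ∈ D}, where ↓_≤ d := {x : ∃y ∈ d, x ≤ y}. If f satisfies the BFC^⊏ for E, then f satisfies the BFC^⊏ for D. -/
/-- The `≤`-downset of a set. -/
def downLe {X : Type*} [LE X] (d : Set X) : Set X := {x | ∃ y ∈ d, x ≤ y}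

/-- For a continuous `≤`-preserving map `f` between KM-spaces
and a finite family `D` of clopens of `Y`, if `f` satisfies the BFC^⊏ for
`E = {↓_≤ d : d ∈ D}`, then `f` satisfies the BFC^⊏ for `D`. -/
theorem bfc_of_bfc_downsets_km {X Y : Type*}
    [TopologicalSpace X] [CompactSpace X] [T2Space X] [PartialOrder X]
    [TopologicalSpace Y] [CompactSpace Y] [T2Space Y] [PartialOrder Y]
    (sqX : X → X → Prop) (sqY : Y → Y → Prop)
    -- X is a modalized Esakia space
    (hbasisX : ∀ (x : X) (U : Set X), IsOpen U → x ∈ U →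
      ∃ V : Set X, IsClopen V ∧ x ∈ V ∧ V ⊆ U)
    (hupClosedX : ∀ x : X, IsClosed {y | x ≤ y})
    (hdownClopenX : ∀ U : Set X, IsClopen U → IsClopen {x | ∃ y ∈ U, x ≤ y})
    (hboxClopenX : ∀ U : Set X, IsClopen U → (∀ x y, x ∈ U → x ≤ y → y ∈ U) →
      IsClopen (boxSet sqX U))
    (hboxUpsetX : ∀ U : Set X, IsClopen U → (∀ x y, x ∈ U → x ≤ y → y ∈ U) →
      (∀ x y, x ∈ boxSet sqX U → x ≤ y → y ∈ boxSet sqX U))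
    (hreflX : ∀ x y : X, x ≤ y ↔ x = y ∨ sqX x y)
    -- X validates the KM axiom
    (hkmX : ∀ U : Set X, IsClopen U → (∀ x y, x ∈ U → x ≤ y → y ∈ U) →
      ∀ x : X, (∀ y, x ≤ y → (y ∈ boxSet sqX U → y ∈ U)) → x ∈ U)
    -- Y is a modalized Esakia space
    (hbasisY : ∀ (y : Y) (U : Set Y), IsOpen U → y ∈ U →
      ∃ V : Set Y, IsClopen V ∧ y ∈ V ∧ V ⊆ U)
    (hupClosedY : ∀ x : Y, IsClosed {y | x ≤ y})
    (hdownClopenY : ∀ U : Set Y, IsClopen U → IsClopen {x | ∃ y ∈ U, x ≤ y})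
    (hboxClopenY : ∀ U : Set Y, IsClopen U → (∀ x y, x ∈ U → x ≤ y → y ∈ U) →
      IsClopen (boxSet sqY U))
    (hboxUpsetY : ∀ U : Set Y, IsClopen U → (∀ x y, x ∈ U → x ≤ y → y ∈ U) →
      (∀ x y, x ∈ boxSet sqY U → x ≤ y → y ∈ boxSet sqY U))
    (hreflY : ∀ x y : Y, x ≤ y ↔ x = y ∨ sqY x y)
    -- Y validates the KM axiom
    (hkmY : ∀ U : Set Y, IsClopen U → (∀ x y, x ∈ U → x ≤ y → y ∈ U) →
      ∀ x : Y, (∀ y, x ≤ y → (y ∈ boxSet sqY U → y ∈ U)) → x ∈ U)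
    -- f is continuous and ≤-preserving
    (f : X → Y) (hf : Continuous f) (hmono : ∀ x y : X, x ≤ y → f x ≤ f y)
    (D : Set (Set Y)) (hDfin : D.Finite) (hDclopen : ∀ d ∈ D, IsClopen d)
    -- f satisfies the BFC^⊏ for E = {↓_≤ d : d ∈ D}
    (hBFCE : ∀ (x : X), ∀ d ∈ D,
      ((∃ y ∈ downLe d, sqY (f x) y) ↔ (∃ z : X, sqX x z ∧ f z ∈ downLe d))) :
    -- then f satisfies the BFC^⊏ for D
    ∀ (x : X), ∀ d ∈ D,
      ((∃ y ∈ d, sqY (f x) y) ↔ (∃ z : X, sqX x z ∧ f z ∈ d)) := by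
  intro x d hd
  have hsqle : ∀ a b : Y, sqY a b → a ≤ b := fun a b h => (hreflY a b).2 (Or.inr h)
  have hsqleX : ∀ a b : X, sqX a b → a ≤ b := fun a b h => (hreflX a b).2 (Or.inr h)
  constructor
  · rintro ⟨y, hy, hxy⟩
    -- y ∈ downLe d
    have hyD : y ∈ downLe d := ⟨y, hy, le_refl y⟩
    obtain ⟨z₀, hxz₀, hfz₀⟩ := (hBFCE x d hd).1 ⟨y, hyD, hxy⟩
    -- C = f⁻¹(↓d) is a clopen downset
    set C : Set X := f ⁻¹' (downLe d) with hC
    have hCclopen : IsClopen C := (hdownClopenY d (hDclopen d hd)).preimage hf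
    have hCdown : ∀ a b : X, a ≤ b → b ∈ C → a ∈ C := by
      intro a b hab hb
      obtain ⟨c, hc, hbc⟩ := hb
      exact ⟨c, hc, le_trans (hmono a b hab) hbc⟩
    -- U = Cᶜ is a clopen upset
    have hUclopen : IsClopen Cᶜ := hCclopen.compl
    have hUup : ∀ a b : X, a ∈ Cᶜ → a ≤ b → b ∈ Cᶜ := by
      intro a b ha hab hb
      exact ha (hCdown a b hab hb)
    -- find a ⊏-maximal point of C above z₀
    have hmax : ∃ z, z₀ ≤ z ∧ z ∈ C ∧ ∀ w, sqX z w → w ∉ C := by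
      by_contra hcon
      push_neg at hcon
      have : z₀ ∈ Cᶜ := by
        refine hkmX Cᶜ hUclopen hUup z₀ ?_
        intro w hzw hbox
        intro hwC
        obtain ⟨v, hv, hvC⟩ := hcon w hzw hwC
        exact hbox v hv hvC
      exact this hfz₀
    obtain ⟨z, hz₀z, hzC, hzmax⟩ := hmax
    -- x ⊏ z
    have hxlez : x ≤ z := le_trans (hsqleX x z₀ hxz₀) hz₀z
    have hxz : sqX x z := by
      rcases (hreflX x z).1 hxlez with heq | hsq
      · exact absurd hfz₀ (hzmax z₀ (heq ▸ hxz₀))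
      · exact hsq
    -- f z ∈ d
    obtain ⟨c, hc, hfzc⟩ := hzC
    rcases (hreflY (f z) c).1 hfzc with heq | hsq
    · exact ⟨z, hxz, heq ▸ hc⟩
    · exfalso
      obtain ⟨w, hzw, hfw⟩ := (hBFCE z d hd).1 ⟨c, ⟨c, hc, le_refl c⟩, hsq⟩
      exact hzmax w hzw hfw
  · rintro ⟨z, hxz, hfz⟩
    have : ∃ y ∈ downLe d, sqY (f x) y :=
      (hBFCE x d hd).2 ⟨z, hxz, ⟨f z, hfz, le_refl _⟩⟩
    obtain ⟨y, ⟨c, hc, hyc⟩, hfxy⟩ := this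
    have hfxc : f x ≤ c := le_trans (hsqle _ _ hfxy) hyc
    rcases (hreflY (f x) c).1 hfxc with heq | hsq
    · -- f x = c, so y ≤ f x and f x ≤ y, hence y = f x and f x ⊏ f x = c
      have hyfx : y = f x := le_antisymm (heq ▸ hyc) (hsqle _ _ hfxy)
      exact ⟨c, hc, by rw [← heq]; exact hyfx ▸ hfxy⟩
    · exact ⟨c, hc, hsq⟩
end

section
/- Let H be a Heyting algebra with a fronton operator box, and let A and D be finite subsets of H. Then there exists a finite subset K ⊆ H containing A ∪ D ∪ {box d : d ∈ D} as well as ⊥ and ⊤, closed under ⊓ and ⊔, such that: (i) for all a, b ∈ K, the element a ⇝ b := ⋁{c ∈ K : a ⊓ c ≤ b} (a finite join computed in H) belongs to K and is a Heyting implication on the finite distributive lattice K, and whenever (a ⇨ b) ∈ K one has a ⇝ b = a ⇨ b; (ii) the map ⊗ : K → K defined by ⊗k := ⋀{b ∈ K : (b ⇝ k) ≤ b} (a finite meet of elements of K, hence in K) is a fronton operator on the Heyting algebra (K, ⊓, ⊔, ⇝, ⊥, ⊤), and ⊗d = box d for every d ∈ D. -/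
attribute [local instance] Classical.propDecidable

/-- The implication of the finite sublattice `K`:
`a ⇝ b := ⋁ {c ∈ K : a ⊓ c ≤ b}` (a finite join computed in `H`). -/
noncomputable def impK {H : Type*} [HeytingAlgebra H] (K : Finset H) (a b : H) : H :=
  (K.filter fun c => a ⊓ c ≤ b).sup id

/-- The fronton operator of the finite sublattice `K`:
`⊗k := ⋀ {b ∈ K : (b ⇝ k) ≤ b}` (a finite meet computed in `H`). -/
noncomputable def boxK {H : Type*} [HeytingAlgebra H] (K : Finset H) (k : H) : H :=
  (K.filter fun b => impK K b k ≤ b).inf id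

section Aux

variable {H : Type*} [HeytingAlgebra H] (K : Finset H)

lemma impK_le_himp (a b : H) : impK K a b ≤ a ⇨ b := by
  refine Finset.sup_le fun c hc => ?_
  have h := (Finset.mem_filter.mp hc).2
  simpa [le_himp_iff, inf_comm] using h

lemma inf_impK_le (a b : H) : a ⊓ impK K a b ≤ b := by
  have h := impK_le_himp K a b
  calc a ⊓ impK K a b ≤ a ⊓ (a ⇨ b) := inf_le_inf_left a h
    _ = a ⊓ b := inf_himp a b
    _ ≤ b := inf_le_right

lemma le_impK {c : H} (hc : c ∈ K) {a b : H} (h : a ⊓ c ≤ b) : c ≤ impK K a b :=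
  Finset.le_sup (f := id) (Finset.mem_filter.mpr ⟨hc, h⟩)

lemma impK_galois {a b c : H} (hc : c ∈ K) : c ≤ impK K a b ↔ a ⊓ c ≤ b := by
  constructor
  · intro h
    exact le_trans (inf_le_inf_left a h) (inf_impK_le K a b)
  · exact le_impK K hc

lemma impK_eq_himp {a b : H} (h : (a ⇨ b) ∈ K) : impK K a b = a ⇨ b :=
  le_antisymm (impK_le_himp K a b) (le_impK K h (by simp [inf_himp]))

variable {K}
variable (hbot : (⊥ : H) ∈ K) (htop : (⊤ : H) ∈ K)
  (hinf : ∀ a ∈ K, ∀ b ∈ K, a ⊓ b ∈ K) (hsup : ∀ a ∈ K, ∀ b ∈ K, a ⊔ b ∈ K)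

include hbot hsup in
lemma sup_mem_of (T : Finset H) (hT : ∀ x ∈ T, x ∈ K) : T.sup id ∈ K := by
  induction T using Finset.induction_on with
  | empty => simpa using hbot
  | @insert _ _ h ih =>
    rw [Finset.sup_insert]
    exact hsup _ (hT _ (Finset.mem_insert_self _ _)) _
      (ih fun x hx => hT x (Finset.mem_insert_of_mem hx))

include htop hinf in
lemma inf_mem_of (T : Finset H) (hT : ∀ x ∈ T, x ∈ K) : T.inf id ∈ K := by
  induction T using Finset.induction_on with
  | empty => simpa using htop
  | @insert _ _ h ih =>
    rw [Finset.inf_insert]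
    exact hinf _ (hT _ (Finset.mem_insert_self _ _)) _
      (ih fun x hx => hT x (Finset.mem_insert_of_mem hx))

include hbot hsup in
lemma impK_mem (a b : H) : impK K a b ∈ K :=
  sup_mem_of hbot hsup _ fun x hx => (Finset.mem_filter.mp hx).1

include hbot hsup in
lemma impK_mono_right {a b b' : H} (h : b ≤ b') : impK K a b ≤ impK K a b' :=
  le_impK K (impK_mem hbot hsup a b) (le_trans (inf_impK_le K a b) h)

include htop hinf hbot hsup in
/-- The key lemma: any finite meet of elements of `F(k) = {b ∈ K : (b ⇝ k) ≤ b}`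
is again in `F(k)` (and in `K`). -/
lemma inf_filter_key (k : H) (T : Finset H)
    (hT : ∀ b ∈ T, b ∈ K ∧ impK K b k ≤ b) :
    T.inf id ∈ K ∧ impK K (T.inf id) k ≤ T.inf id := by
  induction T using Finset.induction_on with
  | empty => exact ⟨by simpa using htop, by simp⟩
  | @insert b T hbT ih =>
    obtain ⟨hmK, hmle⟩ := ih fun x hx => hT x (Finset.mem_insert_of_mem hx)
    obtain ⟨hbK, hble⟩ := hT b (Finset.mem_insert_self _ _)
    rw [Finset.inf_insert]
    set m := T.inf id with hm
    set x := impK K (b ⊓ m) k with hx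
    have hxK : x ∈ K := impK_mem hbot hsup _ _
    have h1 : b ⊓ m ⊓ x ≤ k := inf_impK_le K _ _
    have h3 : m ⊓ x ≤ b := by
      refine le_trans (le_impK K (hinf m hmK x hxK) ?_) hble
      calc b ⊓ (m ⊓ x) = b ⊓ m ⊓ x := by rw [inf_assoc]
        _ ≤ k := h1
    have h4 : m ⊓ x ≤ k := by
      have h5 : m ⊓ x ≤ b ⊓ m ⊓ x := le_inf (le_inf h3 inf_le_left) inf_le_right
      exact le_trans h5 h1
    have hxm : x ≤ m := le_trans (le_impK K hxK h4) hmle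
    have hxb : x ≤ b := by
      have h6 : b ⊓ x ≤ k := by
        have h7 : b ⊓ x ≤ b ⊓ m ⊓ x :=
          le_inf (le_inf inf_le_left (le_trans inf_le_right hxm)) inf_le_right
        exact le_trans h7 h1
      exact le_trans (le_impK K hxK h6) hble
    simp only [id_eq]
    exact ⟨hinf b hbK m hmK, le_inf hxb hxm⟩

include htop hinf hbot hsup in
lemma boxK_mem (k : H) : boxK K k ∈ K :=
  (inf_filter_key hbot htop hinf hsup k _
    (fun b hb => ⟨(Finset.mem_filter.mp hb).1, (Finset.mem_filter.mp hb).2⟩)).1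

include htop hinf hbot hsup in
lemma impK_boxK_le_self (k : H) : impK K (boxK K k) k ≤ boxK K k :=
  (inf_filter_key hbot htop hinf hsup k _
    (fun b hb => ⟨(Finset.mem_filter.mp hb).1, (Finset.mem_filter.mp hb).2⟩)).2

lemma boxK_le_of {k b : H} (hb : b ∈ K) (h : impK K b k ≤ b) : boxK K k ≤ b :=
  Finset.inf_le (f := id) (Finset.mem_filter.mpr ⟨hb, h⟩)

lemma le_boxK {a : H} (ha : a ∈ K) : a ≤ boxK K a := by
  refine Finset.le_inf fun b hb => ?_
  obtain ⟨hbK, hble⟩ := Finset.mem_filter.mp hb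
  exact le_trans (le_impK K ha inf_le_right) hble

include htop hinf hbot hsup in
lemma impK_boxK_le (a : H) : impK K (boxK K a) a ≤ a := by
  have h1 : impK K (boxK K a) a ≤ boxK K a := impK_boxK_le_self hbot htop hinf hsup a
  have h2 : boxK K a ⊓ impK K (boxK K a) a ≤ a := inf_impK_le K _ _
  calc impK K (boxK K a) a ≤ boxK K a ⊓ impK K (boxK K a) a := le_inf h1 le_rfl
    _ ≤ a := h2

include hbot hsup in
lemma boxK_le_sup_impK {a b : H} (hb : b ∈ K) : boxK K a ≤ b ⊔ impK K b a := by
  have htK : b ⊔ impK K b a ∈ K := hsup b hb _ (impK_mem hbot hsup b a)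
  refine boxK_le_of htK ?_
  have h1 : (b ⊔ impK K b a) ⊓ impK K (b ⊔ impK K b a) a ≤ a := inf_impK_le K _ _
  have h2 : b ⊓ impK K (b ⊔ impK K b a) a ≤ a :=
    le_trans (inf_le_inf_right _ le_sup_left) h1
  exact le_trans (le_impK K (impK_mem hbot hsup _ _) h2) le_sup_right

include hbot hsup in
lemma boxK_mono {a b : H} (h : a ≤ b) : boxK K a ≤ boxK K b := by
  refine Finset.le_inf fun c hc => ?_
  obtain ⟨hcK, hcle⟩ := Finset.mem_filter.mp hc
  refine boxK_le_of hcK (le_trans (impK_mono_right hbot hsup h) hcle)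

include htop hinf hbot hsup in
lemma boxK_inf (a b : H) (haK : a ∈ K) (hbK : b ∈ K) :
    boxK K (a ⊓ b) = boxK K a ⊓ boxK K b := by
  refine le_antisymm
    (le_inf (boxK_mono hbot hsup inf_le_left) (boxK_mono hbot hsup inf_le_right)) ?_
  refine Finset.le_inf fun c hc => ?_
  obtain ⟨hcK, hcle⟩ := Finset.mem_filter.mp hc
  have ha := boxK_le_sup_impK hbot hsup (a := a) hcK
  have hb := boxK_le_sup_impK hbot hsup (a := b) hcK
  have hxy : impK K c a ⊓ impK K c b ≤ impK K c (a ⊓ b) := by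
    refine le_impK K (hinf _ (impK_mem hbot hsup c a) _ (impK_mem hbot hsup c b)) ?_
    refine le_inf ?_ ?_
    · calc c ⊓ (impK K c a ⊓ impK K c b) ≤ c ⊓ impK K c a :=
        inf_le_inf_left c inf_le_left
        _ ≤ a := inf_impK_le K c a
    · calc c ⊓ (impK K c a ⊓ impK K c b) ≤ c ⊓ impK K c b :=
        inf_le_inf_left c inf_le_right
        _ ≤ b := inf_impK_le K c b
  calc boxK K a ⊓ boxK K b ≤ (c ⊔ impK K c a) ⊓ (c ⊔ impK K c b) := inf_le_inf ha hb
    _ = c ⊔ impK K c a ⊓ impK K c b := (sup_inf_left c _ _).symm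
    _ ≤ c ⊔ impK K c (a ⊓ b) := sup_le_sup_left hxy c
    _ ≤ c ⊔ c := sup_le_sup_left hcle c
    _ = c := sup_idem c

include htop in
lemma boxK_top : boxK K ⊤ = ⊤ := by
  refine le_antisymm le_top (le_boxK htop)

end Aux

/-- Given a fronton `(H, box)` and finite subsets `A, D ⊆ H`,
there is a finite bounded sublattice `K` of `H` containing `A`, `D` and
`box[D]` such that `⇝` is a Heyting implication on `K` agreeing with `⇨` on
pairs whose implication lies in `K`, and `⊗` is a fronton operator on `K`
agreeing with `box` on `D`. -/
theorem prefiltration_exists {H : Type*} [HeytingAlgebra H] (box : H → H)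
    (hTop : box ⊤ = ⊤)
    (hMeet : ∀ a b : H, box (a ⊓ b) = box a ⊓ box b)
    (hIncr : ∀ a : H, a ≤ box a)
    (hFront : ∀ a b : H, box a ≤ b ⊔ (b ⇨ a))
    (hLob : ∀ a : H, (box a ⇨ a) ≤ a)
    (A D : Finset H) :
    ∃ K : Finset H,
      A ⊆ K ∧ D ⊆ K ∧ (∀ d ∈ D, box d ∈ K)
      ∧ (⊥ : H) ∈ K ∧ (⊤ : H) ∈ K
      ∧ (∀ a ∈ K, ∀ b ∈ K, a ⊓ b ∈ K)
      ∧ (∀ a ∈ K, ∀ b ∈ K, a ⊔ b ∈ K)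
      -- (i) ⇝ is a Heyting implication on K, agreeing with ⇨ when possible
      ∧ (∀ a ∈ K, ∀ b ∈ K, impK K a b ∈ K)
      ∧ (∀ a ∈ K, ∀ b ∈ K, ∀ c ∈ K, (c ≤ impK K a b ↔ a ⊓ c ≤ b))
      ∧ (∀ a ∈ K, ∀ b ∈ K, (a ⇨ b) ∈ K → impK K a b = a ⇨ b)
      -- (ii) ⊗ is a fronton operator on (K, ⊓, ⊔, ⇝, ⊥, ⊤) agreeing with box on D
      ∧ (∀ k ∈ K, boxK K k ∈ K)
      ∧ boxK K ⊤ = ⊤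
      ∧ (∀ a ∈ K, ∀ b ∈ K, boxK K (a ⊓ b) = boxK K a ⊓ boxK K b)
      ∧ (∀ a ∈ K, a ≤ boxK K a)
      ∧ (∀ a ∈ K, ∀ b ∈ K, boxK K a ≤ b ⊔ impK K b a)
      ∧ (∀ a ∈ K, impK K (boxK K a) a ≤ a)
      ∧ (∀ d ∈ D, boxK K d = box d) := by
  classical
  -- the "relative negation" witnesses
  set ν : H → H → H := fun d y => box d ⊓ (y ⇨ d) with hν
  -- base generators
  set G0 : Finset H := A ∪ D ∪ D.image box ∪ {⊥, ⊤} with hG0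
  -- all generators: base ones plus one round of witnesses
  set G : Finset H := G0 ∪ D.biUnion (fun d => G0.image (ν d)) with hG
  -- meets of generators
  set M : Finset H := G.powerset.image (fun T => T.inf id) with hM
  -- joins of meets of generators
  set K : Finset H := M.powerset.image (fun T => T.sup id) with hK
  have hGM : ∀ g ∈ G, g ∈ M := by
    intro g hg
    refine Finset.mem_image.mpr ⟨{g}, ?_, by simp⟩
    simpa [Finset.mem_powerset] using hg
  have hMK : ∀ m ∈ M, m ∈ K := by
    intro m hm
    refine Finset.mem_image.mpr ⟨{m}, ?_, by simp⟩
    simpa [Finset.mem_powerset] using hm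
  have hGK : ∀ g ∈ G, g ∈ K := fun g hg => hMK g (hGM g hg)
  have hG0K : ∀ g ∈ G0, g ∈ K := fun g hg => hGK g (Finset.mem_union_left _ hg)
  have hbotK : (⊥ : H) ∈ K := by
    refine Finset.mem_image.mpr ⟨∅, by simp, by simp⟩
  have htopK : (⊤ : H) ∈ K := by
    refine hG0K ⊤ ?_
    simp [hG0]
  have hAK : ∀ a ∈ A, a ∈ K := fun a ha => hG0K a (by simp [hG0, ha])
  have hDK : ∀ d ∈ D, d ∈ K := fun d hd => hG0K d (by simp [hG0, hd])
  have hDG0 : ∀ d ∈ D, d ∈ G0 := fun d hd => by simp [hG0, hd]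
  have hboxDG0 : ∀ d ∈ D, box d ∈ G0 := fun d hd => by
    simp only [hG0, Finset.mem_union]
    exact Or.inl (Or.inr (Finset.mem_image_of_mem box hd))
  have hboxDK : ∀ d ∈ D, box d ∈ K := fun d hd => hG0K _ (hboxDG0 d hd)
  have hνK : ∀ d ∈ D, ∀ y ∈ G0, ν d y ∈ K := by
    intro d hd y hy
    refine hGK _ (Finset.mem_union_right _ ?_)
    exact Finset.mem_biUnion.mpr ⟨d, hd, Finset.mem_image_of_mem _ hy⟩
  have hsupK : ∀ a ∈ K, ∀ b ∈ K, a ⊔ b ∈ K := by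
    intro a ha b hb
    obtain ⟨T₁, hT₁, rfl⟩ := Finset.mem_image.mp ha
    obtain ⟨T₂, hT₂, rfl⟩ := Finset.mem_image.mp hb
    refine Finset.mem_image.mpr ⟨T₁ ∪ T₂, ?_, ?_⟩
    · rw [Finset.mem_powerset] at *
      exact Finset.union_subset hT₁ hT₂
    · rw [Finset.sup_union]
  have hMinf : ∀ m₁ ∈ M, ∀ m₂ ∈ M, m₁ ⊓ m₂ ∈ M := by
    intro m₁ h₁ m₂ h₂
    obtain ⟨T₁, hT₁, rfl⟩ := Finset.mem_image.mp h₁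
    obtain ⟨T₂, hT₂, rfl⟩ := Finset.mem_image.mp h₂
    refine Finset.mem_image.mpr ⟨T₁ ∪ T₂, ?_, ?_⟩
    · rw [Finset.mem_powerset] at *
      exact Finset.union_subset hT₁ hT₂
    · rw [Finset.inf_union]
  have hinfK : ∀ a ∈ K, ∀ b ∈ K, a ⊓ b ∈ K := by
    intro a ha b hb
    obtain ⟨T₁, hT₁, rfl⟩ := Finset.mem_image.mp ha
    obtain ⟨T₂, hT₂, rfl⟩ := Finset.mem_image.mp hb
    rw [Finset.mem_powerset] at *
    refine Finset.mem_image.mpr ⟨T₁.biUnion (fun m => T₂.image (fun m' => m ⊓ m')), ?_, ?_⟩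
    · rw [Finset.mem_powerset]
      intro x hx
      obtain ⟨m, hm, hx⟩ := Finset.mem_biUnion.mp hx
      obtain ⟨m', hm', rfl⟩ := Finset.mem_image.mp hx
      exact hMinf m (hT₁ hm) m' (hT₂ hm')
    · rw [Finset.sup_biUnion]
      have : ∀ m ∈ T₁, (T₂.image fun m' => m ⊓ m').sup id = m ⊓ T₂.sup id := by
        intro m _
        rw [Finset.sup_image]
        exact (Finset.sup_inf_distrib_left T₂ id m).symm
      rw [Finset.sup_congr rfl this]
      exact (Finset.sup_inf_distrib_right T₁ id (T₂.sup id)).symm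
  -- witnesses for the generators
  have wit_gen : ∀ d ∈ D, ∀ g ∈ G, ∃ c ∈ K, g ⊓ c ≤ d ∧ box d ≤ g ⊔ c := by
    intro d hd g hg
    have hdbox : d ≤ box d := hIncr d
    rcases Finset.mem_union.mp hg with hg0 | hgν
    · -- base generator: witness is ν d g
      refine ⟨ν d g, hνK d hd g hg0, ?_, ?_⟩
      · calc g ⊓ (box d ⊓ (g ⇨ d)) ≤ g ⊓ (g ⇨ d) :=
          inf_le_inf_left g inf_le_right
          _ = g ⊓ d := inf_himp g d
          _ ≤ d := inf_le_right
      · have h1 : box d ≤ g ⊔ (g ⇨ d) := hFront d g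
        calc box d = box d ⊓ (g ⊔ (g ⇨ d)) := (inf_eq_left.mpr h1).symm
          _ = box d ⊓ g ⊔ box d ⊓ (g ⇨ d) := inf_sup_left _ _ _
          _ ≤ g ⊔ ν d g := sup_le_sup inf_le_right le_rfl
    · -- witness generator g = ν d' y
      obtain ⟨d', hd', hy⟩ := Finset.mem_biUnion.mp hgν
      obtain ⟨y, hy0, rfl⟩ := Finset.mem_image.mp hy
      -- some abbreviations
      set B' : H := box d' with hB'
      set x₁ : H := ν d B' with hx₁
      set π : H := (y ⊓ box d) ⊔ d with hπ
      set x₂ : H := π ⊓ ν d d' with hx₂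
      refine ⟨x₁ ⊔ x₂, ?_, ?_, ?_⟩
      · refine hsupK _ (hνK d hd B' (hboxDG0 d' hd')) _ ?_
        refine hinfK _ ?_ _ (hνK d hd d' (hDG0 d' hd'))
        exact hsupK _ (hinfK _ (hG0K y hy0) _ (hboxDK d hd)) _ (hDK d hd)
      · -- meet condition : ν d' y ⊓ (x₁ ⊔ x₂) ≤ d
        rw [inf_sup_left]
        refine sup_le ?_ ?_
        · -- ν d' y ⊓ x₁ ≤ d
          have : ν d' y ⊓ x₁ ≤ B' ⊓ (B' ⇨ d) := by
            refine le_inf ?_ ?_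
            · exact le_trans inf_le_left inf_le_left
            · exact le_trans inf_le_right inf_le_right
          calc ν d' y ⊓ x₁ ≤ B' ⊓ (B' ⇨ d) := this
            _ = B' ⊓ d := inf_himp B' d
            _ ≤ d := inf_le_right
        · -- ν d' y ⊓ x₂ ≤ d
          have h1 : ν d' y ⊓ π ≤ d' ⊔ d := by
            rw [hπ, inf_sup_left]
            refine sup_le ?_ (le_trans inf_le_right le_sup_right)
            calc ν d' y ⊓ (y ⊓ box d) ≤ (y ⇨ d') ⊓ y :=
              inf_le_inf (inf_le_right) inf_le_left
              _ = y ⊓ d' := by rw [inf_comm, inf_himp]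
              _ ≤ d' ⊔ d := le_trans inf_le_right le_sup_left
          calc ν d' y ⊓ x₂ = (ν d' y ⊓ π) ⊓ ν d d' := by rw [hx₂, ← inf_assoc]
            _ ≤ (d' ⊔ d) ⊓ (d' ⇨ d) := inf_le_inf h1 inf_le_right
            _ = d' ⊓ (d' ⇨ d) ⊔ d ⊓ (d' ⇨ d) := inf_sup_right _ _ _
            _ ≤ d := by
                refine sup_le ?_ inf_le_left
                rw [inf_himp]; exact inf_le_right
      · -- join condition : box d ≤ ν d' y ⊔ (x₁ ⊔ x₂)
        have hdc : d ≤ x₂ := by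
          refine le_inf (le_trans le_sup_right le_rfl) (le_inf hdbox ?_)
          exact le_himp_iff.mpr inf_le_left
        -- step 1 : ν d (ν d' y) ≤ x₁ ⊔ x₂
        have step1 : ν d (ν d' y) ≤ x₁ ⊔ x₂ := by
          have hsplit : ν d (ν d' y) ≤ B' ⊔ (B' ⇨ d) := le_trans inf_le_left (hFront d B')
          have h2 : ν d (ν d' y) ⊓ (B' ⇨ d) ≤ x₁ :=
            le_inf (le_trans inf_le_left inf_le_left) inf_le_right
          set q : H := ν d (ν d' y) ⊓ B' with hq
          have hqsplit : q ≤ y ⊔ (y ⇨ d') := le_trans inf_le_right (hFront d' y)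
          have h3 : q ⊓ (y ⇨ d') ≤ d := by
            have : q ⊓ (y ⇨ d') ≤ (ν d' y ⇨ d) ⊓ ν d' y := by
              refine le_inf (le_trans inf_le_left (le_trans inf_le_left inf_le_right)) ?_
              exact le_inf (le_trans inf_le_left inf_le_right) inf_le_right
            calc q ⊓ (y ⇨ d') ≤ (ν d' y ⇨ d) ⊓ ν d' y := this
              _ = ν d' y ⊓ (ν d' y ⇨ d) := inf_comm _ _
              _ = ν d' y ⊓ d := inf_himp _ d
              _ ≤ d := inf_le_right
          have h4 : q ⊓ y ≤ x₂ := by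
            refine le_inf ?_ (le_inf ?_ ?_)
            · -- ≤ π
              refine le_trans ?_ (le_sup_left : y ⊓ box d ≤ π)
              refine le_inf inf_le_right ?_
              exact le_trans inf_le_left (le_trans inf_le_left inf_le_left)
            · exact le_trans inf_le_left (le_trans inf_le_left inf_le_left)
            · -- ≤ d' ⇨ d
              rw [le_himp_iff]
              have hkey : q ⊓ y ⊓ d' ≤ (ν d' y ⇨ d) ⊓ ν d' y := by
                refine le_inf ?_ ?_
                · exact le_trans inf_le_left (le_trans inf_le_left
                    (le_trans inf_le_left inf_le_right))
                · -- q ⊓ y ⊓ d' ≤ ν d' y = B' ⊓ (y ⇨ d')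
                  refine le_inf ?_ ?_
                  · exact le_trans inf_le_left (le_trans inf_le_left inf_le_right)
                  · exact le_trans inf_le_right (le_himp_iff.mpr inf_le_left)
              calc q ⊓ y ⊓ d' ≤ (ν d' y ⇨ d) ⊓ ν d' y := hkey
                _ = ν d' y ⊓ (ν d' y ⇨ d) := inf_comm _ _
                _ = ν d' y ⊓ d := inf_himp _ d
                _ ≤ d := inf_le_right
          have hqle : q ≤ x₁ ⊔ x₂ := by
            calc q = q ⊓ (y ⊔ (y ⇨ d')) := (inf_eq_left.mpr hqsplit).symm
              _ = q ⊓ y ⊔ q ⊓ (y ⇨ d') := inf_sup_left _ _ _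
              _ ≤ x₂ ⊔ d := sup_le_sup h4 h3
              _ ≤ x₂ ⊔ x₂ := sup_le_sup_left hdc x₂
              _ = x₂ := sup_idem x₂
              _ ≤ x₁ ⊔ x₂ := le_sup_right
          calc ν d (ν d' y) = ν d (ν d' y) ⊓ (B' ⊔ (B' ⇨ d)) :=
            (inf_eq_left.mpr hsplit).symm
            _ = q ⊔ ν d (ν d' y) ⊓ (B' ⇨ d) := inf_sup_left _ _ _
            _ ≤ (x₁ ⊔ x₂) ⊔ x₁ := sup_le_sup hqle h2
            _ ≤ x₁ ⊔ x₂ := by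
              refine sup_le le_rfl le_sup_left
        -- step 2
        have h1 : box d ≤ ν d' y ⊔ (ν d' y ⇨ d) := hFront d (ν d' y)
        calc box d = box d ⊓ (ν d' y ⊔ (ν d' y ⇨ d)) := (inf_eq_left.mpr h1).symm
          _ = box d ⊓ ν d' y ⊔ ν d (ν d' y) := inf_sup_left _ _ _
          _ ≤ ν d' y ⊔ (x₁ ⊔ x₂) := sup_le_sup inf_le_right step1
  -- witnesses for meets of generators
  have wit_meet : ∀ d ∈ D, ∀ T : Finset H, T ⊆ G →
      ∃ c ∈ K, T.inf id ⊓ c ≤ d ∧ box d ≤ T.inf id ⊔ c := by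
    intro d hd T
    induction T using Finset.induction_on with
    | empty =>
      intro _
      refine ⟨d, hDK d hd, ?_, ?_⟩
      · simp
      · exact le_trans le_top le_sup_left
    | @insert g T hgT ih =>
      intro hsub
      obtain ⟨cm, hcmK, hcm1, hcm2⟩ :=
        ih (fun x hx => hsub (Finset.mem_insert_of_mem hx))
      obtain ⟨cg, hcgK, hcg1, hcg2⟩ :=
        wit_gen d hd g (hsub (Finset.mem_insert_self _ _))
      rw [Finset.inf_insert]
      set m := T.inf id with hm
      refine ⟨cg ⊔ cm, hsupK _ hcgK _ hcmK, ?_, ?_⟩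
      · rw [inf_sup_left]
        refine sup_le ?_ ?_
        · exact le_trans (inf_le_inf_right cg (inf_le_left (b := m))) hcg1
        · exact le_trans (inf_le_inf_right cm (inf_le_right (a := g))) hcm1
      · have h1 : box d ≤ (g ⊔ cg) ⊓ (m ⊔ cm) := le_inf hcg2 hcm2
        refine le_trans h1 ?_
        rw [inf_sup_right, inf_sup_left, inf_sup_left]
        refine sup_le (sup_le ?_ ?_) (sup_le ?_ ?_) <;>
          first
          | exact le_sup_left
          | exact le_trans inf_le_left (le_trans le_sup_left le_sup_left)
          | exact le_trans inf_le_right (le_trans le_sup_right le_sup_right)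
          | exact le_trans inf_le_left (le_trans le_sup_left le_sup_right)
          | exact le_trans inf_le_right (le_trans le_sup_right le_sup_left)
          | exact le_trans inf_le_left inf_le_left
          | exact le_trans inf_le_right inf_le_right
  -- witnesses for every element of K
  have wit_sup : ∀ d ∈ D, ∀ T : Finset H, T ⊆ M →
      ∃ c ∈ K, T.sup id ⊓ c ≤ d ∧ box d ≤ T.sup id ⊔ c := by
    intro d hd T
    induction T using Finset.induction_on with
    | empty =>
      intro _
      refine ⟨⊤, htopK, by simp, by simp⟩
    | @insert m T hmT ih =>
      intro hT
      obtain ⟨ct, hctK, hct1, hct2⟩ := ih (fun x hx => hT (Finset.mem_insert_of_mem hx))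
      have hmM : m ∈ M := hT (Finset.mem_insert_self _ _)
      obtain ⟨Tm, hTm, rfl⟩ := Finset.mem_image.mp hmM
      rw [Finset.mem_powerset] at hTm
      obtain ⟨cm, hcmK, hcm1, hcm2⟩ := wit_meet d hd Tm hTm
      rw [Finset.sup_insert]
      set m := Tm.inf id with hm
      set t := T.sup id with ht
      refine ⟨cm ⊓ ct, hinfK _ hcmK _ hctK, ?_, ?_⟩
      · rw [inf_comm, inf_sup_left]
        refine sup_le ?_ ?_
        · exact le_trans (le_inf inf_le_right (le_trans inf_le_left inf_le_left)) hcm1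
        · exact le_trans (le_inf inf_le_right (le_trans inf_le_left inf_le_right)) hct1
      · have h1 : box d ≤ (m ⊔ cm) ⊓ (t ⊔ ct) := le_inf hcm2 hct2
        refine le_trans h1 ?_
        rw [inf_sup_right, inf_sup_left, inf_sup_left]
        refine sup_le (sup_le ?_ ?_) (sup_le ?_ ?_) <;>
          first
          | exact le_sup_right
          | exact le_trans inf_le_left (le_trans le_sup_left le_sup_left)
          | exact le_trans inf_le_right (le_trans le_sup_right le_sup_left)
          | exact le_trans inf_le_left (le_trans le_sup_right le_sup_left)
          | exact le_trans inf_le_right (le_trans le_sup_left le_sup_left)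
  have wit : ∀ d ∈ D, ∀ b ∈ K, ∃ c ∈ K, b ⊓ c ≤ d ∧ box d ≤ b ⊔ c := by
    intro d hd b hb
    obtain ⟨T, hT, rfl⟩ := Finset.mem_image.mp hb
    rw [Finset.mem_powerset] at hT
    exact wit_sup d hd T hT
  -- the agreement of boxK with box on D
  have hboxagree : ∀ d ∈ D, boxK K d = box d := by
    intro d hd
    refine le_antisymm ?_ ?_
    · -- boxK K d ≤ box d since box d ∈ F(d)
      refine boxK_le_of (hboxDK d hd) ?_
      have h1 : box d ⊓ impK K (box d) d ≤ d := inf_impK_le K _ _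
      have h2 : impK K (box d) d ≤ box d ⇨ d := le_himp_iff.mpr (by rwa [inf_comm])
      exact le_trans (le_trans h2 (hLob d)) (hIncr d)
    · -- box d ≤ every member of F(d)
      refine Finset.le_inf fun b hb => ?_
      obtain ⟨hbK, hble⟩ := Finset.mem_filter.mp hb
      obtain ⟨c, hcK, hc1, hc2⟩ := wit d hd b hbK
      have : c ≤ b := le_trans (le_impK K hcK hc1) hble
      calc box d ≤ b ⊔ c := hc2
        _ ≤ b ⊔ b := sup_le_sup_left this b
        _ = b := sup_idem b
  -- assemble everything
  refine ⟨K, fun a ha => hAK a ha, fun d hd => hDK d hd, hboxDK, hbotK, htopK, hinfK, hsupK, ?_, ?_, ?_, ?_, ?_, ?_, ?_, ?_, ?_, ?_⟩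
  · exact fun a _ b _ => impK_mem hbotK hsupK a b
  · exact fun a _ b _ c hc => impK_galois K hc
  · exact fun a _ b _ h => impK_eq_himp K h
  · exact fun k _ => boxK_mem hbotK htopK hinfK hsupK k
  · exact boxK_top htopK
  · exact fun a ha b hb => boxK_inf hbotK htopK hinfK hsupK a b ha hb
  · exact fun a ha => le_boxK ha
  · exact fun a _ b hb => boxK_le_sup_impK hbotK hsupK hb
  · exact fun a _ => impK_boxK_le hbotK htopK hinfK hsupK a
  · exact hboxagree
end

section
/- Let B be a Boolean algebra and L ⊆ B a sublattice containing ⊥ and ⊤ (i.e., L is closed under ⊓ and ⊔ and contains the bounds). Then the Boolean subalgebra of B generated by L is exactly the set of all finite meets ⋀_{i=1}^{n} (aᵢᶜ ⊔ bᵢ) with a₁, …, aₙ, b₁, …, bₙ ∈ L; in particular, every element of the Boolean subalgebra generated by L is a finite meet of elements of the form aᶜ ⊔ b with a, b ∈ L. -/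
/-- The Boolean subalgebra of `B` generated by a subset `L`: the least subset
of `B` containing `L`, `⊥` and `⊤`, closed under `ᶜ`, `⊓` and `⊔`. -/
def boolClosure {B : Type*} [BooleanAlgebra B] (L : Set B) : Set B :=
  ⋂₀ {S : Set B | L ⊆ S ∧ (⊥ : B) ∈ S ∧ (⊤ : B) ∈ S ∧
      (∀ a ∈ S, aᶜ ∈ S) ∧ (∀ a ∈ S, ∀ b ∈ S, a ⊓ b ∈ S) ∧
      (∀ a ∈ S, ∀ b ∈ S, a ⊔ b ∈ S)}

private lemma inf_univ_equiv' {α β B : Type*} [Fintype α] [Fintype β]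
    [SemilatticeInf B] [OrderTop B] (e : α ≃ β) (f : β → B) :
    (Finset.univ : Finset β).inf f = Finset.univ.inf (fun a => f (e a)) := by
  rw [← Finset.univ_map_equiv_to_embedding e, Finset.inf_map]
  rfl

private lemma inf_univ_sum' {α β B : Type*} [Fintype α] [Fintype β]
    [SemilatticeInf B] [OrderTop B] (f : α ⊕ β → B) :
    (Finset.univ : Finset (α ⊕ β)).inf f
      = (Finset.univ.inf fun a => f (Sum.inl a)) ⊓ (Finset.univ.inf fun b => f (Sum.inr b)) := by
  classical
  rw [← Finset.univ_disjSum_univ, ← Finset.map_inl_disjUnion_map_inr,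
    Finset.disjUnion_eq_union, Finset.inf_union, Finset.inf_map, Finset.inf_map]
  rfl

/-- If `L` is a bounded sublattice of a Boolean algebra `B`,
then the Boolean subalgebra generated by `L` consists exactly of the finite
meets `⋀ᵢ (aᵢᶜ ⊔ bᵢ)` with `aᵢ, bᵢ ∈ L`. -/
theorem boolClosure_eq_meets_of_implications {B : Type*} [BooleanAlgebra B]
    (L : Set B)
    (hbot : (⊥ : B) ∈ L) (htop : (⊤ : B) ∈ L)
    (hinf : ∀ a ∈ L, ∀ b ∈ L, a ⊓ b ∈ L)
    (hsup : ∀ a ∈ L, ∀ b ∈ L, a ⊔ b ∈ L) :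
    boolClosure L =
      {x | ∃ (n : ℕ) (a b : Fin n → B), (∀ i, a i ∈ L) ∧ (∀ i, b i ∈ L) ∧
        x = (Finset.univ : Finset (Fin n)).inf (fun i => (a i)ᶜ ⊔ b i)} := by
  set S : Set B := {x | ∃ (n : ℕ) (a b : Fin n → B), (∀ i, a i ∈ L) ∧ (∀ i, b i ∈ L) ∧
        x = (Finset.univ : Finset (Fin n)).inf (fun i => (a i)ᶜ ⊔ b i)} with hS
  have hLsub : L ⊆ S := by
    intro x hx
    exact ⟨1, fun _ => ⊤, fun _ => x, fun _ => htop, fun _ => hx, by simp⟩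
  have hSbot : (⊥ : B) ∈ S :=
    ⟨1, fun _ => ⊤, fun _ => ⊥, fun _ => htop, fun _ => hbot, by simp⟩
  have hStop : (⊤ : B) ∈ S :=
    ⟨0, Fin.elim0, Fin.elim0, fun i => i.elim0, fun i => i.elim0, by simp⟩
  have hSinf : ∀ x ∈ S, ∀ y ∈ S, x ⊓ y ∈ S := by
    rintro x ⟨n, a, b, ha, hb, rfl⟩ y ⟨m, c, d, hc, hd, rfl⟩
    refine ⟨n + m, Sum.elim a c ∘ finSumFinEquiv.symm, Sum.elim b d ∘ finSumFinEquiv.symm,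
      ?_, ?_, ?_⟩
    · intro i; rcases h : finSumFinEquiv.symm i with j | j <;>
        simp only [Function.comp_apply, h, Sum.elim_inl, Sum.elim_inr] <;>
        first | exact ha j | exact hc j
    · intro i; rcases h : finSumFinEquiv.symm i with j | j <;>
        simp only [Function.comp_apply, h, Sum.elim_inl, Sum.elim_inr] <;>
        first | exact hb j | exact hd j
    · rw [inf_univ_equiv' finSumFinEquiv
        (fun i => ((Sum.elim a c ∘ finSumFinEquiv.symm) i)ᶜ ⊔ (Sum.elim b d ∘ finSumFinEquiv.symm) i),
        inf_univ_sum']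
      simp
  have hSsup : ∀ x ∈ S, ∀ y ∈ S, x ⊔ y ∈ S := by
    rintro x ⟨n, a, b, ha, hb, rfl⟩ y ⟨m, c, d, hc, hd, rfl⟩
    refine ⟨n * m,
      (fun p : Fin n × Fin m => a p.1 ⊓ c p.2) ∘ finProdFinEquiv.symm,
      (fun p : Fin n × Fin m => b p.1 ⊔ d p.2) ∘ finProdFinEquiv.symm,
      fun i => hinf _ (ha _) _ (hc _), fun i => hsup _ (hb _) _ (hd _), ?_⟩
    rw [Finset.inf_sup_inf, inf_univ_equiv' finProdFinEquiv, ← Finset.univ_product_univ]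
    apply Finset.inf_congr rfl
    intro p _
    simp only [Function.comp_apply, Equiv.symm_apply_apply]
    rw [compl_inf, sup_sup_sup_comm]
  have hScompl : ∀ x ∈ S, xᶜ ∈ S := by
    rintro x ⟨n, a, b, ha, hb, rfl⟩
    have hterm : ∀ i : Fin n, a i ⊓ (b i)ᶜ ∈ S := by
      intro i
      refine ⟨2, ![⊤, b i], ![a i, ⊥], ?_, ?_, ?_⟩
      · intro j; fin_cases j <;> simp [htop, hb i]
      · intro j; fin_cases j <;> simp [ha i, hbot]
      · simp [Fin.univ_succ]
    rw [Finset.compl_inf]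
    rcases Nat.eq_zero_or_pos n with hn | hn
    · subst hn; simpa using hSbot
    · have : Nonempty (Fin n) := ⟨⟨0, hn⟩⟩
      have : (Finset.univ : Finset (Fin n)).Nonempty := Finset.univ_nonempty
      refine SupClosed.finsetSup_mem (fun p hp q hq => hSsup p hp q hq) this ?_
      intro i _
      simpa using hterm i
  apply subset_antisymm
  · intro x hx
    exact hx S ⟨hLsub, hSbot, hStop, hScompl, hSinf, hSsup⟩
  · rintro x ⟨n, a, b, ha, hb, rfl⟩
    intro T hT
    obtain ⟨hLT, hTbot, hTtop, hTcompl, hTinf, hTsup⟩ := hT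
    rcases Nat.eq_zero_or_pos n with hn | hn
    · subst hn; simpa using hTtop
    · have : Nonempty (Fin n) := ⟨⟨0, hn⟩⟩
      have hne : (Finset.univ : Finset (Fin n)).Nonempty := Finset.univ_nonempty
      refine InfClosed.finsetInf_mem (fun p hp q hq => hTinf p hp q hq) hne ?_
      intro i _
      exact hTsup _ (hTcompl _ (hLT (ha i))) _ (hLT (hb i))
end
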